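/- Fix 0 < q < 1, 0 < a < q^{−1}, b < q^{−1} with bq < 1, and c ∈ ℝ ∖ {0} with (1−acq^{n+1})(1−bq^{n+1}/c) > 0 for all n ∈ ℕ. Define a_n^γ = (bq√(aq)/(1−bq))·((1−acq^{n+1})(1−bq^{n+1}/c)/(1−abq^{2n+2}))·√((1−q^{n+1})(1−aq^{n+1})(1−bq^{n+1})(1−abq^{n+1})/((1−abq^{2n+1})(1−abq^{2n+3}))) and b_n^γ = q^{−n}(1−acq^{n+1})(1−bq^{n+1}/c)(1−abq^{n+1})(1−bq^{n+1})/((1−bq)(1−abq^{2n+1})(1−abq^{2n+2})) + ab²q^{n+2}(1−acq^{n})(1−bq^{n}/c)(1−q^{n})(1−aq^{n})/((1−bq)(1−abq^{2n})(1−abq^{2n+1})). Then for every finitely supported sequence c : ℕ → ℝ (writing c_n for its terms): ∑_{n=0}^{∞} b_n^γ c_n² + 2∑_{n=0}^{∞} a_n^γ c_n c_{n+1} ≥ 0. -/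

import Mathlib

private lemma div_nonneg_of_mul_nonneg' {x y : ℝ} (h : 0 ≤ x * y) : 0 ≤ x / y := by
  rcases eq_or_ne y 0 with hy | hy
  · simp [hy]
  · have : x / y = x * y / y ^ 2 := by field_simp
    rw [this]
    exact div_nonneg h (sq_nonneg y)

private lemma key_quad (l m A x y : ℝ) (hl : 0 ≤ l) (hm : 0 ≤ m)
    (hA : A ^ 2 ≤ l * m) : 0 ≤ l * x ^ 2 + m * y ^ 2 + 2 * (A * x * y) := by
  rcases hl.lt_or_eq with hl' | hl'
  · nlinarith [sq_nonneg (l * x + A * y), sq_nonneg y, mul_nonneg hl hm]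
  · have hA0 : A = 0 := by nlinarith [sq_nonneg A]
    rw [hA0, ← hl']
    nlinarith [sq_nonneg y]

private lemma general_form (L M A B : ℕ → ℝ) (hL : ∀ n, 0 ≤ L n) (hM : ∀ n, 0 ≤ M n)
    (hM0 : M 0 = 0) (hAlm : ∀ n, A n ^ 2 ≤ L n * M (n + 1))
    (hB : ∀ n, B n = L n + M n) (c' : ℕ →₀ ℝ) :
    0 ≤ (∑' n : ℕ, B n * c' n ^ 2) + 2 * ∑' n : ℕ, A n * c' n * c' (n + 1) := by
  set N := c'.support.sup id + 1 with hN
  have hzero : ∀ n, N ≤ n → c' n = 0 := by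
    intro n hn
    by_contra h
    have hmem : n ∈ c'.support := Finsupp.mem_support_iff.2 h
    have h2 := Finset.le_sup (f := id) hmem
    simp only [id] at h2
    omega
  have hT1 : (∑' n : ℕ, B n * c' n ^ 2) = ∑ n ∈ Finset.range (N + 1), B n * c' n ^ 2 := by
    apply tsum_eq_sum
    intro n hn
    have hn' : N + 1 ≤ n := by rw [Finset.mem_range] at hn; omega
    have : c' n = 0 := hzero n (by omega)
    simp [this]
  have hT2 : (∑' n : ℕ, A n * c' n * c' (n + 1)) = ∑ n ∈ Finset.range (N + 1), A n * c' n * c' (n + 1) := by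
    apply tsum_eq_sum
    intro n hn
    have hn' : N + 1 ≤ n := by rw [Finset.mem_range] at hn; omega
    have : c' n = 0 := hzero n (by omega)
    simp [this]
  rw [hT1, hT2]
  have hshift : ∑ n ∈ Finset.range (N + 1), M n * c' n ^ 2
      = ∑ n ∈ Finset.range (N + 1), M (n + 1) * c' (n + 1) ^ 2 := by
    rw [Finset.sum_range_succ' (fun n => M n * c' n ^ 2) N]
    rw [Finset.sum_range_succ (fun n => M (n + 1) * c' (n + 1) ^ 2) N]
    simp [hM0, hzero (N + 1) (by omega)]
  have hsplit : ∑ n ∈ Finset.range (N + 1), B n * c' n ^ 2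
      = ∑ n ∈ Finset.range (N + 1), (L n * c' n ^ 2 + M (n + 1) * c' (n + 1) ^ 2) := by
    rw [Finset.sum_add_distrib, ← hshift, ← Finset.sum_add_distrib]
    apply Finset.sum_congr rfl
    intro n _
    rw [hB n]; ring
  rw [hsplit, Finset.mul_sum, ← Finset.sum_add_distrib]
  apply Finset.sum_nonneg
  intro n _
  have := key_quad (L n) (M (n + 1)) (A n) (c' n) (c' (n + 1)) (hL n) (hM (n + 1)) (hAlm n)
  nlinarith [this]

set_option maxHeartbeats 1000000

/-- The Jacobi quadratic form of the 'shift in b' tridiagonalisation coefficients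
`a_n^γ`, `b_n^γ` is nonnegative on finitely supported sequences; this is the key step
showing the spectrum of the self-adjoint closure of `T^γ` is contained in `[0,∞)`. -/
theorem stmt_15 (q a b c : ℝ) (hq : 0 < q) (hq1 : q < 1)
    (ha0 : 0 < a) (ha1 : a < q⁻¹) (hb : b < q⁻¹) (hbq : b * q < 1)
    (hc : c ≠ 0)
    (hpos : ∀ n : ℕ, 0 < (1 - a * c * q ^ (n + 1)) * (1 - b * q ^ (n + 1) / c))
    (A B : ℕ → ℝ)
    (hA : ∀ n : ℕ, A n =
      b * q * Real.sqrt (a * q) / (1 - b * q)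
        * ((1 - a * c * q ^ (n + 1)) * (1 - b * q ^ (n + 1) / c)
            / (1 - a * b * q ^ (2 * n + 2)))
        * Real.sqrt ((1 - q ^ (n + 1)) * (1 - a * q ^ (n + 1)) * (1 - b * q ^ (n + 1))
            * (1 - a * b * q ^ (n + 1))
            / ((1 - a * b * q ^ (2 * n + 1)) * (1 - a * b * q ^ (2 * n + 3)))))
    (hB : ∀ n : ℕ, B n =
      q ^ (-(n : ℤ)) * (1 - a * c * q ^ (n + 1)) * (1 - b * q ^ (n + 1) / c)
          * (1 - a * b * q ^ (n + 1)) * (1 - b * q ^ (n + 1))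
          / ((1 - b * q) * (1 - a * b * q ^ (2 * n + 1)) * (1 - a * b * q ^ (2 * n + 2)))
        + a * b ^ 2 * q ^ (n + 2) * (1 - a * c * q ^ n) * (1 - b * q ^ n / c)
            * (1 - q ^ n) * (1 - a * q ^ n)
          / ((1 - b * q) * (1 - a * b * q ^ (2 * n)) * (1 - a * b * q ^ (2 * n + 1)))) :
    ∀ c' : ℕ →₀ ℝ,
      0 ≤ (∑' n : ℕ, B n * c' n ^ 2) + 2 * ∑' n : ℕ, A n * c' n * c' (n + 1) := by
  intro c'
  -- basic positivity facts
  have hpq : ∀ k : ℕ, (0:ℝ) < q ^ k := fun k => pow_pos hq k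
  have hqk1 : ∀ k : ℕ, q ^ k ≤ 1 := fun k => pow_le_one₀ hq.le hq1.le
  have haq1 : a * q < 1 := by
    have := mul_lt_mul_of_pos_right ha1 hq
    rwa [inv_mul_cancel₀ hq.ne'] at this
  have hbq0 : 0 < 1 - b * q := by linarith
  have h1' : ∀ k : ℕ, 1 ≤ k → 0 < 1 - q ^ k := by
    intro k hk
    have : q ^ k < 1 := pow_lt_one₀ hq.le hq1 (by omega)
    linarith
  have h2' : ∀ k : ℕ, 1 ≤ k → 0 < 1 - a * q ^ k := by
    intro k hk
    obtain ⟨j, rfl⟩ : ∃ j, k = j + 1 := ⟨k - 1, by omega⟩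
    have : a * q ^ (j + 1) < 1 := by
      calc a * q ^ (j + 1) = (a * q) * q ^ j := by ring
        _ < 1 * q ^ j := mul_lt_mul_of_pos_right haq1 (hpq j)
        _ ≤ 1 := by simpa using hqk1 j
    linarith
  have h3' : ∀ k : ℕ, 1 ≤ k → 0 < 1 - b * q ^ k := by
    intro k hk
    obtain ⟨j, rfl⟩ : ∃ j, k = j + 1 := ⟨k - 1, by omega⟩
    rcases le_or_gt b 0 with h | h
    · have : b * q ^ (j + 1) ≤ 0 := mul_nonpos_of_nonpos_of_nonneg h (hpq (j+1)).le
      linarith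
    · have : b * q ^ (j + 1) < 1 := by
        calc b * q ^ (j + 1) = (b * q) * q ^ j := by ring
          _ < 1 * q ^ j := mul_lt_mul_of_pos_right hbq (hpq j)
          _ ≤ 1 := by simpa using hqk1 j
      linarith
  have h4' : ∀ k : ℕ, 2 ≤ k → 0 < 1 - a * b * q ^ k := by
    intro k hk
    obtain ⟨j, rfl⟩ : ∃ j, k = j + 2 := ⟨k - 2, by omega⟩
    rcases le_or_gt b 0 with h | h
    · have hab : a * b ≤ 0 := mul_nonpos_of_nonneg_of_nonpos ha0.le h
      have : a * b * q ^ (j + 2) ≤ 0 := mul_nonpos_of_nonpos_of_nonneg hab (hpq (j+2)).le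
      linarith
    · have habq : (a * q) * (b * q) < 1 := by
        nlinarith [mul_pos ha0 hq, mul_pos h hq]
      have : a * b * q ^ (j + 2) < 1 := by
        calc a * b * q ^ (j + 2) = ((a * q) * (b * q)) * q ^ j := by ring
          _ ≤ ((a * q) * (b * q)) * 1 := by
              apply mul_le_mul_of_nonneg_left (hqk1 j)
              positivity
          _ < 1 := by linarith
      linarith
  -- nonnegativity of L
  have hLpos : ∀ n : ℕ,
      0 ≤ q ^ (-(n : ℤ)) * (1 - a * c * q ^ (n + 1)) * (1 - b * q ^ (n + 1) / c)
          * (1 - a * b * q ^ (n + 1)) * (1 - b * q ^ (n + 1))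
          / ((1 - b * q) * (1 - a * b * q ^ (2 * n + 1)) * (1 - a * b * q ^ (2 * n + 2))) := by
    intro n
    rw [zpow_neg, zpow_natCast]
    rcases n with _ | m
    · apply div_nonneg_of_mul_nonneg'
      simp only [pow_zero, inv_one, one_mul]
      have hp0 := hpos 0
      have h42 : 0 < 1 - a * b * q ^ 2 := h4' 2 le_rfl
      nlinarith [mul_nonneg hp0.le (mul_nonneg (sq_nonneg (1 - a*b*q))
        (mul_nonneg (sq_nonneg (1 - b*q)) h42.le))]
    · apply div_nonneg
      · have hz : (0:ℝ) < (q ^ (m + 1))⁻¹ := by positivity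
        nlinarith [mul_pos (mul_pos (mul_pos hz (hpos (m+1)))
          (h4' (m+1+1) (by omega))) (h3' (m+1+1) (by omega))]
      · exact (mul_pos (mul_pos hbq0 (h4' (2*(m+1)+1) (by omega)))
          (h4' (2*(m+1)+2) (by omega))).le
  -- nonnegativity of M
  have hMpos : ∀ n : ℕ,
      0 ≤ a * b ^ 2 * q ^ (n + 2) * (1 - a * c * q ^ n) * (1 - b * q ^ n / c)
            * (1 - q ^ n) * (1 - a * q ^ n)
          / ((1 - b * q) * (1 - a * b * q ^ (2 * n)) * (1 - a * b * q ^ (2 * n + 1))) := by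
    intro n
    rcases n with _ | m
    · norm_num
    · apply div_nonneg
      · nlinarith [mul_nonneg (mul_nonneg (by positivity : (0:ℝ) ≤ a * b ^ 2 * q ^ (m+1+2))
          (mul_nonneg (h1' (m+1) (by omega)).le (h2' (m+1) (by omega)).le)) (hpos m).le]
      · exact (mul_pos (mul_pos hbq0 (h4' (2*(m+1)) (by omega)))
          (h4' (2*(m+1)+1) (by omega))).le
  have hM0 : a * b ^ 2 * q ^ (0 + 2) * (1 - a * c * q ^ 0) * (1 - b * q ^ 0 / c)
            * (1 - q ^ 0) * (1 - a * q ^ 0)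
          / ((1 - b * q) * (1 - a * b * q ^ (2 * 0)) * (1 - a * b * q ^ (2 * 0 + 1))) = 0 := by
    norm_num
  -- the key identity A n ^ 2 = L n * M (n+1)
  have hAlm : ∀ n : ℕ, A n ^ 2 ≤
      (q ^ (-(n : ℤ)) * (1 - a * c * q ^ (n + 1)) * (1 - b * q ^ (n + 1) / c)
          * (1 - a * b * q ^ (n + 1)) * (1 - b * q ^ (n + 1))
          / ((1 - b * q) * (1 - a * b * q ^ (2 * n + 1)) * (1 - a * b * q ^ (2 * n + 2))))
      * (a * b ^ 2 * q ^ (n + 1 + 2) * (1 - a * c * q ^ (n + 1)) * (1 - b * q ^ (n + 1) / c)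
            * (1 - q ^ (n + 1)) * (1 - a * q ^ (n + 1))
          / ((1 - b * q) * (1 - a * b * q ^ (2 * (n + 1))) * (1 - a * b * q ^ (2 * (n + 1) + 1)))) := by
    intro n
    rw [hA n]
    by_cases hd2 : 1 - a * b * q ^ (2 * n + 1) = 0
    · rw [hd2]
      simp only [zero_mul, mul_zero, div_zero, Real.sqrt_zero]
      norm_num
    · have hS : 0 ≤ (1 - q ^ (n + 1)) * (1 - a * q ^ (n + 1)) * (1 - b * q ^ (n + 1))
            * (1 - a * b * q ^ (n + 1))
            / ((1 - a * b * q ^ (2 * n + 1)) * (1 - a * b * q ^ (2 * n + 3))) := by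
        rcases n with _ | m
        · apply div_nonneg_of_mul_nonneg'
          have h := mul_nonneg (mul_nonneg (mul_nonneg (h1' 1 le_rfl).le (h2' 1 le_rfl).le)
            (h3' 1 le_rfl).le) (mul_nonneg (sq_nonneg (1 - a*b*q)) (h4' 3 (by omega)).le)
          have e : (1 - q ^ (0 + 1)) * (1 - a * q ^ (0 + 1)) * (1 - b * q ^ (0 + 1))
              * (1 - a * b * q ^ (0 + 1))
              * ((1 - a * b * q ^ (2 * 0 + 1)) * (1 - a * b * q ^ (2 * 0 + 3)))
              = (1 - q ^ 1) * (1 - a * q ^ 1) * (1 - b * q ^ 1)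
                * ((1 - a * b * q) ^ 2 * (1 - a * b * q ^ 3)) := by ring
          rw [e]; exact h
        · apply div_nonneg
          · exact mul_nonneg (mul_nonneg (mul_nonneg (h1' (m+1+1) (by omega)).le
              (h2' (m+1+1) (by omega)).le) (h3' (m+1+1) (by omega)).le)
              (h4' (m+1+1) (by omega)).le
          · exact (mul_pos (h4' (2*(m+1)+1) (by omega)) (h4' (2*(m+1)+3) (by omega))).le
      have hsq1 : Real.sqrt (a * q) ^ 2 = a * q := Real.sq_sqrt (by positivity)
      have hsq2 : Real.sqrt ((1 - q ^ (n + 1)) * (1 - a * q ^ (n + 1)) * (1 - b * q ^ (n + 1))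
            * (1 - a * b * q ^ (n + 1))
            / ((1 - a * b * q ^ (2 * n + 1)) * (1 - a * b * q ^ (2 * n + 3)))) ^ 2
          = (1 - q ^ (n + 1)) * (1 - a * q ^ (n + 1)) * (1 - b * q ^ (n + 1))
            * (1 - a * b * q ^ (n + 1))
            / ((1 - a * b * q ^ (2 * n + 1)) * (1 - a * b * q ^ (2 * n + 3))) :=
        Real.sq_sqrt hS
      apply le_of_eq
      rw [mul_pow, mul_pow, div_pow, mul_pow, hsq1, hsq2]
      have hqn : q ^ n ≠ 0 := pow_ne_zero n hq.ne'
      have d1 : 1 - b * q ≠ 0 := hbq0.ne'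
      have d3 : 1 - a * b * q ^ (2 * n + 2) ≠ 0 := (h4' (2*n+2) (by omega)).ne'
      have d4 : 1 - a * b * q ^ (2 * n + 3) ≠ 0 := (h4' (2*n+3) (by omega)).ne'
      have d5 : 1 - a * b * q ^ (2 * (n + 1)) ≠ 0 := (h4' (2*(n+1)) (by omega)).ne'
      have d6 : 1 - a * b * q ^ (2 * (n + 1) + 1) ≠ 0 := (h4' (2*(n+1)+1) (by omega)).ne'
      rw [zpow_neg, zpow_natCast]
      field_simp
      ring
  exact general_form
    (fun n => q ^ (-(n : ℤ)) * (1 - a * c * q ^ (n + 1)) * (1 - b * q ^ (n + 1) / c)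
          * (1 - a * b * q ^ (n + 1)) * (1 - b * q ^ (n + 1))
          / ((1 - b * q) * (1 - a * b * q ^ (2 * n + 1)) * (1 - a * b * q ^ (2 * n + 2))))
    (fun n => a * b ^ 2 * q ^ (n + 2) * (1 - a * c * q ^ n) * (1 - b * q ^ n / c)
            * (1 - q ^ n) * (1 - a * q ^ n)
          / ((1 - b * q) * (1 - a * b * q ^ (2 * n)) * (1 - a * b * q ^ (2 * n + 1))))
    A B hLpos hMpos hM0 hAlm hB c'
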